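/- For n ≥ 2, the logic NA_{0,n} does not prove ¬□^{n+1}⊥. -/

import Mathlib

inductive Formula : Type
  | bot : Formula
  | var : ℕ → Formula
  | neg : Formula → Formula
  | or : Formula → Formula → Formula
  | box : Formula → Formula
  deriving DecidableEq

namespace Formula

def imp (φ ψ : Formula) : Formula := .or (.neg φ) ψ

def and (φ ψ : Formula) : Formula := .neg (.or (.neg φ) (.neg ψ))

/-- □^n φ -/
def boxn : ℕ → Formula → Formula
  | 0, φ => φ
  | k+1, φ => .box (boxn k φ)

/-- the set of subformulas -/
def sub : Formula → Finset Formula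
  | .bot => {.bot}
  | .var p => {.var p}
  | .neg φ => insert (.neg φ) φ.sub
  | .or φ ψ => insert (.or φ ψ) (φ.sub ∪ ψ.sub)
  | .box φ => insert (.box φ) φ.sub

/-- ∼ρ -/
def negg : Formula → Formula
  | .neg φ => φ
  | φ => .neg φ

end Formula

def NSub (ψ : Formula) : Finset Formula := ψ.sub ∪ ψ.sub.image Formula.negg

/-- boolean evaluation treating boxed formulas and variables as atoms -/
def evalP (v : Formula → Bool) : Formula → Bool
  | .bot => false
  | .var p => v (.var p)
  | .neg φ => !(evalP v φ)
  | .or φ ψ => evalP v φ || evalP v ψ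
  | .box φ => v (.box φ)

/-- propositional tautologies in the modal language -/
def Tautology (φ : Formula) : Prop := ∀ v, evalP v φ = true

/-- Provability in NA_{m,n} (ros = false) and NRA_{m,n} (ros = true):
    propositional tautologies, the scheme □^n φ → □^m φ, modus ponens,
    necessitation, and (if ros) the rule Ros^□ : ¬□φ / ¬□□φ. -/
inductive Prov (m n : ℕ) (ros : Bool) : Formula → Prop
  | taut {φ} : Tautology φ → Prov m n ros φ
  | axA (φ) : Prov m n ros ((Formula.boxn n φ).imp (Formula.boxn m φ))
  | mp {φ ψ} : Prov m n ros (φ.imp ψ) → Prov m n ros φ → Prov m n ros ψ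
  | nec {φ} : Prov m n ros φ → Prov m n ros (.box φ)
  | ros {φ} : ros = true → Prov m n ros (.neg (.box φ)) →
      Prov m n ros (.neg (.box (.box φ)))

/-- An N-frame on world set W: a binary relation R_φ for each formula φ. -/
abbrev NFrame (W : Type) := Formula → W → W → Prop

structure NModel (W : Type) where
  Rel : NFrame W
  V : W → ℕ → Prop

/-- satisfaction in an N-model -/
def Sat {W : Type} (M : NModel W) : W → Formula → Prop
  | _, .bot => False
  | w, .var p => M.V w p
  | w, .neg φ => ¬ Sat M w φ
  | w, .or φ ψ => Sat M w φ ∨ Sat M w ψ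
  | w, .box φ => ∀ w', M.Rel φ w w' → Sat M w' φ

/-- x R_φ^k y : there is a φ-path of length k from x to y -/
def FPath {W : Type} (R : NFrame W) (φ : Formula) : ℕ → W → W → Prop
  | 0, x, y => x = y
  | k+1, x, y => ∃ w, R (Formula.boxn k φ) x w ∧ FPath R φ k w y

/-- (m,n)-accessibility for φ -/
def AccFor {W : Type} (R : NFrame W) (m n : ℕ) (φ : Formula) : Prop :=
  ∀ x y, FPath R φ m x y → FPath R φ n x y

/-- Γ-(m,n)-accessibility -/
def SubAcc {W : Type} (R : NFrame W) (m n : ℕ) (Γ : Finset Formula) : Prop :=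
  ∀ φ, Formula.boxn m φ ∈ Γ → AccFor R m n φ

/-- (m,n)-accessibility -/
def Accessible {W : Type} (R : NFrame W) (m n : ℕ) : Prop :=
  ∀ φ, AccFor R m n φ

def ValidM {W : Type} (M : NModel W) (ψ : Formula) : Prop := ∀ w, Sat M w ψ

def ValidF {W : Type} (R : NFrame W) (ψ : Formula) : Prop :=
  ∀ V : W → ℕ → Prop, ValidM ⟨R, V⟩ ψ




namespace Stmt7Aux

def strip : ℕ → Formula → Option Formula
  | 0, φ => some φ
  | k+1, .box φ => strip k φ
  | _+1, _ => none

lemma strip_sizeOf : ∀ (k : ℕ) (φ χ : Formula), strip k φ = some χ →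
    sizeOf χ + k ≤ sizeOf φ := by
  intro k
  induction k with
  | zero => intro φ χ h; simp [strip] at h; simp [h]
  | succ k ih =>
    intro φ χ h
    cases φ with
    | box ψ =>
      have := ih ψ χ h
      simp only [Formula.box.sizeOf_spec]
      omega
    | bot => simp [strip] at h
    | var p => simp [strip] at h
    | neg ψ => simp [strip] at h
    | or ψ₁ ψ₂ => simp [strip] at h

lemma strip_eq_boxn : ∀ (k : ℕ) (φ χ : Formula), strip k φ = some χ →
    φ = Formula.boxn k χ := by
  intro k
  induction k with
  | zero => intro φ χ h; simpa [strip, Formula.boxn] using h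
  | succ k ih =>
    intro φ χ h
    cases φ with
    | box ψ => simpa [Formula.boxn] using ih ψ χ h
    | bot => simp [strip] at h
    | var p => simp [strip] at h
    | neg ψ => simp [strip] at h
    | or ψ₁ ψ₂ => simp [strip] at h

lemma strip_boxn : ∀ (k : ℕ) (φ : Formula), strip k (Formula.boxn k φ) = some φ := by
  intro k
  induction k with
  | zero => intro φ; simp [strip, Formula.boxn]
  | succ k ih => intro φ; simpa [strip, Formula.boxn] using ih φ

def r (m : ℕ) : Formula → Bool
  | .bot => true
  | .var _ => false
  | .neg ψ => !(r m ψ)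
  | .or ψ₁ ψ₂ => r m ψ₁ && r m ψ₂
  | .box ψ =>
    match h : strip (m+1) ψ with
    | some χ => r m χ
    | none => false
termination_by φ => sizeOf φ
decreasing_by
  all_goals simp_wf
  all_goals try omega
  all_goals (have := strip_sizeOf (m+1) _ χ h; omega)

/-- a R_φ b -/
def aR (m : ℕ) (φ : Formula) : Bool := (strip (m+1) φ).elim false (r m)

lemma r_box (m : ℕ) (ψ : Formula) : r m (.box ψ) = aR m ψ := by
  unfold r
  split <;> simp_all [aR]

/-- the two-point countermodel: a = false, b = true -/
def M (m : ℕ) : NModel Bool :=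
  ⟨fun φ x y => x = true ∨ (y = true ∧ aR m φ = true), fun _ _ => True⟩

lemma sat_a_box (m : ℕ) (ψ : Formula) :
    Sat (M m) false (.box ψ) ↔ (aR m ψ = true → Sat (M m) true ψ) := by
  constructor
  · intro h ha; exact h true (Or.inr ⟨rfl, ha⟩)
  · intro h w' hw'
    rcases hw' with h1 | ⟨rfl, ha⟩
    · simp at h1
    · exact h ha

lemma sat_b_chain (m : ℕ) : ∀ (k : ℕ) (χ : Formula) (w : Bool),
    Sat (M m) true (Formula.boxn (k+1) χ) → Sat (M m) w χ := by
  intro k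
  induction k with
  | zero => intro χ w h; exact h w (Or.inl rfl)
  | succ k ih =>
    intro χ w h
    exact ih χ w (h true (Or.inl rfl))

lemma r_iff (m : ℕ) (ψ : Formula) : r m ψ = true ↔ ¬ Sat (M m) false ψ := by
  have key : ∀ (N : ℕ) (ψ : Formula), sizeOf ψ ≤ N →
      (r m ψ = true ↔ ¬ Sat (M m) false ψ) := by
    intro N
    induction N with
    | zero => intro ψ h; cases ψ <;> simp at h
    | succ N ih =>
      intro ψ hsz
      cases ψ with
      | bot => simp [r, Sat]
      | var p => simp [r, Sat, M]
      | neg φ =>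
        have hφ : sizeOf φ ≤ N := by
          simp only [Formula.neg.sizeOf_spec] at hsz; omega
        have := ih φ hφ
        simp only [r, Sat, Bool.not_eq_true']
        constructor
        · intro h h2; rw [← this] at h2; simp [h2] at h
        · intro h
          by_contra hc
          simp at hc
          exact h (this.mp hc)
      | or φ₁ φ₂ =>
        have h1 : sizeOf φ₁ ≤ N := by
          simp only [Formula.or.sizeOf_spec] at hsz; omega
        have h2 : sizeOf φ₂ ≤ N := by
          simp only [Formula.or.sizeOf_spec] at hsz; omega
        simp only [r, Sat, Bool.and_eq_true, ih φ₁ h1, ih φ₂ h2]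
        tauto
      | box φ =>
        rw [r_box]
        rw [sat_a_box]
        constructor
        · intro ha
          intro hcon
          have hSb := hcon ha
          rcases hχ : strip (m+1) φ with _ | χ
          · simp [aR, hχ] at ha
          · have hrχ : r m χ = true := by simpa [aR, hχ] using ha
            have heq := strip_eq_boxn (m+1) φ χ hχ
            have hszχ : sizeOf χ ≤ N := by
              have := strip_sizeOf (m+1) φ χ hχ
              simp only [Formula.box.sizeOf_spec] at hsz
              omega
            have hna : ¬ Sat (M m) false χ := (ih χ hszχ).mp hrχ
            subst heq
            exact hna (sat_b_chain m m χ false hSb)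
        · intro h
          by_contra hc
          simp at hc
          exact h (fun ha => by simp [ha] at hc)
  exact key (sizeOf ψ) ψ le_rfl

lemma sat_evalP {W : Type} (M : NModel W) (w : W) (φ : Formula) :
    Sat M w φ ↔ evalP (fun χ => @decide (Sat M w χ) (Classical.dec _)) φ = true := by
  induction φ with
  | bot => simp [Sat, evalP]
  | var p =>
    simp [Sat, evalP]
    exact (@decide_eq_true_iff _ (Classical.dec _)).symm
  | neg φ ih => simp [Sat, evalP, ih]
  | or φ₁ φ₂ ih1 ih2 => simp [Sat, evalP, ih1, ih2]
  | box φ ih => simp [evalP]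

lemma sat_imp {W : Type} (M : NModel W) (w : W) (φ ψ : Formula) :
    Sat M w (φ.imp ψ) ↔ (Sat M w φ → Sat M w ψ) := by
  simp only [Formula.imp, Sat]
  tauto

lemma sound (m : ℕ) {φ : Formula} (h : Prov 0 (m+2) false φ) : ValidM (M m) φ := by
  induction h with
  | taut ht =>
    intro w
    rw [sat_evalP]
    exact ht _
  | axA ψ =>
    intro w
    rw [sat_imp]
    intro hbox
    simp only [Formula.boxn]
    cases w with
    | true => exact sat_b_chain m (m+1) ψ true hbox
    | false =>
      have hform : (Formula.boxn (m+2) ψ) = .box (Formula.boxn (m+1) ψ) := rfl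
      rw [hform, sat_a_box] at hbox
      by_cases ha : aR m (Formula.boxn (m+1) ψ) = true
      · have hSb := hbox ha
        exact sat_b_chain m m ψ false hSb
      · have : aR m (Formula.boxn (m+1) ψ) = r m ψ := by
          simp [aR, strip_boxn (m+1) ψ]
        rw [this] at ha
        have : ¬ (r m ψ = true) := ha
        rw [r_iff] at this
        exact not_not.mp this
  | mp h1 h2 ih1 ih2 =>
    intro w
    exact (sat_imp _ _ _ _).mp (ih1 w) (ih2 w)
  | nec h ih =>
    intro w
    intro w' _
    exact ih w'
  | ros hr _ _ => simp at hr

lemma boxn_succ' : ∀ (k : ℕ) (φ : Formula),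
    Formula.boxn (k+1) φ = Formula.boxn k (.box φ) := by
  intro k
  induction k with
  | zero => intro φ; rfl
  | succ k ih =>
    intro φ
    show (Formula.boxn (k+1) φ).box = (Formula.boxn k (Formula.box φ)).box
    rw [ih]

end Stmt7Aux

theorem stmt7 (n : ℕ) (hn : 2 ≤ n) :
    ¬ Prov 0 n false (.neg (Formula.boxn (n + 1) .bot)) := by
  obtain ⟨m, rfl⟩ : ∃ m, n = m + 2 := ⟨n - 2, by omega⟩
  intro h
  have hv := Stmt7Aux.sound m h false
  apply hv
  -- show Sat (M m) false (boxn (m+3) ⊥) : a has no (boxn (m+2) ⊥)-successors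
  show Sat (Stmt7Aux.M m) false (.box (Formula.boxn (m+2) .bot))
  rw [Stmt7Aux.sat_a_box]
  intro ha
  exfalso
  have h1 : Formula.boxn (m+2) Formula.bot = Formula.boxn (m+1) (.box .bot) := by
    rw [Stmt7Aux.boxn_succ']
  rw [h1] at ha
  have h2 : Stmt7Aux.aR m (Formula.boxn (m+1) (.box .bot)) = Stmt7Aux.r m (.box .bot) := by
    simp [Stmt7Aux.aR, Stmt7Aux.strip_boxn (m+1)]
  rw [h2, Stmt7Aux.r_box] at ha
  simp [Stmt7Aux.aR, Stmt7Aux.strip] at ha
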